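/- The multiscale Monge decomposition algorithm approximates the optimum within a multiplicative factor (1 + ε): defining ALG_0 = 0 and, for 1 ≤ i ≤ n, ALG_i = min over pairs (k, j) with k ≥ 1, 0 ≤ j < i and (1 + ε)^{k−1} ≤ i − j ≤ (1 + ε)^{k} of [ ALG_j + w'(j, i)/(1 + ε)^{k−1} + C ], one has OPT_i ≤ ALG_i ≤ (1 + ε)·OPT_i for all 0 ≤ i ≤ n. -/

import Mathlib

/-- The multiscale Monge decomposition approximates the optimum within a
multiplicative factor `(1+ε)`: with `ALG 0 = 0` and `ALG i` the minimum over pairs `(k, j)`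
with `k ≥ 1`, `0 ≤ j < i` and `(1+ε)^(k−1) ≤ i − j ≤ (1+ε)^k` of
`ALG j + w'(j,i)/(1+ε)^(k−1) + C`, one has `OPT i ≤ ALG i ≤ (1+ε)·OPT i` for all `0 ≤ i ≤ n`. -/
theorem stmt12 (n : ℕ) (hn : 1 ≤ n) (P : ℕ → ℝ) (C : ℝ) (hC : 0 ≤ C)
    (S : ℕ → ℝ) (hS : ∀ i, S i = ∑ m ∈ Finset.Icc 1 i, P m)
    (w' : ℕ → ℕ → ℝ)
    (hw' : ∀ j i : ℕ, j < i → i ≤ n →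
      w' j i = ((i : ℝ) - j) * ∑ m ∈ Finset.Icc (j + 1) i, (P m) ^ 2 - (S i - S j) ^ 2)
    (ε : ℝ) (hε : 0 < ε)
    (OPT : ℕ → ℝ) (hOPT0 : OPT 0 = 0)
    (hOPT : ∀ i, ∀ hi : 1 ≤ i, i ≤ n →
      OPT i = (Finset.range i).inf' (Finset.nonempty_range_iff.mpr (by omega))
        (fun j => OPT j + w' j i / ((i : ℝ) - j)) + C)
    (ALG : ℕ → ℝ) (hALG0 : ALG 0 = 0)
    (hALG : ∀ i, 1 ≤ i → i ≤ n →
      IsLeast {z : ℝ | ∃ k j : ℕ, 1 ≤ k ∧ j < i ∧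
          (1 + ε) ^ (k - 1) ≤ (i : ℝ) - j ∧ (i : ℝ) - j ≤ (1 + ε) ^ k ∧
          z = ALG j + w' j i / (1 + ε) ^ (k - 1) + C}
        (ALG i)) :
    ∀ i, i ≤ n → OPT i ≤ ALG i ∧ ALG i ≤ (1 + ε) * OPT i := by
  -- w' is nonnegative by Cauchy–Schwarz
  have hwnn : ∀ j i : ℕ, j < i → i ≤ n → 0 ≤ w' j i := by
    intro j i hji hin
    rw [hw' j i hji hin]
    have hSd : S i - S j = ∑ m ∈ Finset.Icc (j + 1) i, P m := by
      rw [hS, hS]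
      have h1 : Finset.Icc 1 i = Finset.Ioc 0 i := by
        rw [← Finset.Icc_add_one_left_eq_Ioc, zero_add]
      have h2 : Finset.Icc 1 j = Finset.Ioc 0 j := by
        rw [← Finset.Icc_add_one_left_eq_Ioc, zero_add]
      have h3 : Finset.Icc (j + 1) i = Finset.Ioc j i := by
        rw [← Finset.Icc_add_one_left_eq_Ioc]
      rw [h1, h2, h3, ← Finset.sum_Ioc_consecutive P (Nat.zero_le j) (le_of_lt hji)]
      ring
    have hcard : ((Finset.Icc (j + 1) i).card : ℝ) = (i : ℝ) - j := by
      rw [Nat.card_Icc]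
      have : i + 1 - (j + 1) = i - j := by omega
      rw [this, Nat.cast_sub (le_of_lt hji)]
    have hcs := sq_sum_le_card_mul_sum_sq (s := Finset.Icc (j + 1) i) (f := P)
    rw [hSd]
    rw [hcard] at hcs
    linarith
  intro i
  induction i using Nat.strong_induction_on with
  | _ i ih =>
    intro hin
    rcases Nat.eq_zero_or_pos i with h0 | hi
    · subst h0; simp [hOPT0, hALG0]
    -- i ≥ 1
    obtain ⟨hmem, hlb⟩ := hALG i hi hin
    obtain ⟨k, j, hk, hji, hlow, hhigh, heq⟩ := hmem
    have hjn : j ≤ n := le_trans (le_of_lt hji) hin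
    have hjiR : (j : ℝ) < (i : ℝ) := by exact_mod_cast hji
    have hdpos : (0 : ℝ) < (i : ℝ) - j := by linarith
    have hppos : (0 : ℝ) < (1 + ε) ^ (k - 1) := pow_pos (by linarith) _
    have ihj := ih j hji hjn
    have hwj := hwnn j i hji hin
    constructor
    · -- OPT i ≤ ALG i
      rw [hOPT i hi hin, heq]
      have h1 : (Finset.range i).inf' (Finset.nonempty_range_iff.mpr (by omega))
          (fun j => OPT j + w' j i / ((i : ℝ) - j)) ≤ OPT j + w' j i / ((i : ℝ) - j) :=
        Finset.inf'_le _ (Finset.mem_range.mpr hji)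
      have h2 : w' j i / ((i : ℝ) - j) ≤ w' j i / (1 + ε) ^ (k - 1) :=
        div_le_div_of_nonneg_left hwj hppos hlow
      linarith [ihj.1]
    · -- ALG i ≤ (1+ε) * OPT i
      rw [hOPT i hi hin]
      have hne : (Finset.range i).Nonempty := Finset.nonempty_range_iff.mpr hi.ne'
      obtain ⟨j', hj'mem, hj'eq⟩ := Finset.exists_mem_eq_inf'
        hne (fun j => OPT j + w' j i / ((i : ℝ) - j))
      have hj'i : j' < i := Finset.mem_range.mp hj'mem
      have hj'n : j' ≤ n := le_trans (le_of_lt hj'i) hin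
      have hj'R : (j' : ℝ) < (i : ℝ) := by exact_mod_cast hj'i
      have hd1 : (1 : ℝ) ≤ (i : ℝ) - j' := by
        have : (j' : ℝ) + 1 ≤ i := by exact_mod_cast hj'i
        linarith
      have hd0 : (0 : ℝ) < (i : ℝ) - j' := by linarith
      have h1ε : (1 : ℝ) < 1 + ε := by linarith
      have hex : ∃ m : ℕ, (i : ℝ) - j' ≤ (1 + ε) ^ m := by
        obtain ⟨m, hm⟩ := pow_unbounded_of_one_lt ((i : ℝ) - j') h1ε
        exact ⟨m, hm.le⟩
      set k0 := Nat.find hex with hk0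
      have hk0spec : (i : ℝ) - j' ≤ (1 + ε) ^ k0 := Nat.find_spec hex
      -- choose k' ≥ 1 with the bracket property
      obtain ⟨k', hk'1, hk'low, hk'high⟩ :
          ∃ k' : ℕ, 1 ≤ k' ∧ (1 + ε) ^ (k' - 1) ≤ (i : ℝ) - j' ∧
            (i : ℝ) - j' ≤ (1 + ε) ^ k' := by
        rcases Nat.eq_zero_or_pos k0 with hz | hpos
        · refine ⟨1, le_refl 1, ?_, ?_⟩
          · simpa using hd1
          · rw [hz] at hk0spec; simp at hk0spec
            calc (i : ℝ) - j' ≤ 1 := by linarith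
              _ ≤ (1 + ε) ^ 1 := by simpa using h1ε.le
        · refine ⟨k0, hpos, ?_, hk0spec⟩
          have := Nat.find_min hex (show k0 - 1 < k0 by omega)
          push_neg at this
          linarith
      have hwj' := hwnn j' i hj'i hin
      have hp' : (0 : ℝ) < (1 + ε) ^ (k' - 1) := pow_pos (by linarith) _
      -- ALG i ≤ ALG j' + w'/(1+ε)^(k'-1) + C
      have hub : ALG i ≤ ALG j' + w' j' i / (1 + ε) ^ (k' - 1) + C :=
        hlb ⟨k', j', hk'1, hj'i, hk'low, hk'high, rfl⟩
      have ihj' := ih j' hj'i hj'n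
      -- (i-j')/(1+ε) ≤ (1+ε)^(k'-1)
      have hpow : ((i : ℝ) - j') / (1 + ε) ≤ (1 + ε) ^ (k' - 1) := by
        have hkk : k' - 1 + 1 = k' := by omega
        have : (1 + ε) ^ k' = (1 + ε) ^ (k' - 1) * (1 + ε) := by
          rw [← pow_succ, hkk]
        rw [div_le_iff₀ (by linarith)]
        linarith [hk'high, this]
      have hdiv : w' j' i / (1 + ε) ^ (k' - 1) ≤ (1 + ε) * (w' j' i / ((i : ℝ) - j')) := by
        have h1 : w' j' i / (1 + ε) ^ (k' - 1) ≤ w' j' i / (((i : ℝ) - j') / (1 + ε)) :=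
          div_le_div_of_nonneg_left hwj' (by positivity) hpow
        have h2 : w' j' i / (((i : ℝ) - j') / (1 + ε)) = (1 + ε) * (w' j' i / ((i : ℝ) - j')) := by
          field_simp
        linarith [h1, h2.le]
      have hinf : (Finset.range i).inf' (Finset.nonempty_range_iff.mpr (by omega))
          (fun j => OPT j + w' j i / ((i : ℝ) - j)) = OPT j' + w' j' i / ((i : ℝ) - j') := hj'eq
      rw [hinf]
      have hexp : (1 + ε) * (OPT j' + w' j' i / ((i : ℝ) - j') + C) =
          (1 + ε) * OPT j' + (1 + ε) * (w' j' i / ((i : ℝ) - j')) + (1 + ε) * C := by ring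
      have hCε : C ≤ (1 + ε) * C := by nlinarith
      linarith [hub, ihj'.2, hdiv, hexp.le, hexp.ge]
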